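/- Let Γ be an m×m real symmetric positive definite matrix, Ĉ an n×n real symmetric positive semidefinite matrix, H an m×n real matrix, and y' ∈ ℝᵐ. Define a* = (HᵀΓ⁻¹HĈ + Iₙ)⁻¹HᵀΓ⁻¹y' and v'* = Ĉa*. Then for every pair (a, v') ∈ ℝⁿ × ℝⁿ with Ĉa = v', one has ½(y' − Hv'*)ᵀΓ⁻¹(y' − Hv'*) + ½⟨a*, v'*⟩ ≤ ½(y' − Hv')ᵀΓ⁻¹(y' − Hv') + ½⟨a, v'⟩, with equality only if v' = v'*; moreover v'* = ĈHᵀ(HĈHᵀ + Γ)⁻¹y'. -/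

import Mathlib

open Matrix

private lemma dot_flip {m n : ℕ} (H : Matrix (Fin m) (Fin n) ℝ) (x : Fin n → ℝ)
    (w : Fin m → ℝ) : (H *ᵥ x) ⬝ᵥ w = x ⬝ᵥ (Hᵀ *ᵥ w) := by
  rw [dotProduct_mulVec, vecMul_transpose, dotProduct_comm]

theorem stmt_7 {m n : ℕ}
    (Γ : Matrix (Fin m) (Fin m) ℝ) (hΓ : Γ.PosDef)
    (C : Matrix (Fin n) (Fin n) ℝ) (hC : C.PosSemidef)
    (H : Matrix (Fin m) (Fin n) ℝ)
    (y' : Fin m → ℝ)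
    (astar : Fin n → ℝ)
    (hastar : astar = ((Hᵀ * Γ⁻¹ * H * C + 1)⁻¹ * (Hᵀ * Γ⁻¹)).mulVec y')
    (vstar : Fin n → ℝ)
    (hvstar : vstar = C.mulVec astar) :
    (∀ a v' : Fin n → ℝ, C.mulVec a = v' →
      ((1 / 2) * ((y' - H.mulVec vstar) ⬝ᵥ Γ⁻¹.mulVec (y' - H.mulVec vstar)) +
        (1 / 2) * (astar ⬝ᵥ vstar) ≤
       (1 / 2) * ((y' - H.mulVec v') ⬝ᵥ Γ⁻¹.mulVec (y' - H.mulVec v')) +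
        (1 / 2) * (a ⬝ᵥ v')) ∧
      ((1 / 2) * ((y' - H.mulVec v') ⬝ᵥ Γ⁻¹.mulVec (y' - H.mulVec v')) +
        (1 / 2) * (a ⬝ᵥ v') =
       (1 / 2) * ((y' - H.mulVec vstar) ⬝ᵥ Γ⁻¹.mulVec (y' - H.mulVec vstar)) +
        (1 / 2) * (astar ⬝ᵥ vstar) → v' = vstar)) ∧
    vstar = (C * Hᵀ * (H * C * Hᵀ + Γ)⁻¹).mulVec y' := by
  have hB : (Γ⁻¹).PosDef := hΓ.inv
  set B := Γ⁻¹ with hBdef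
  have hBsym : Bᵀ = B := by
    rw [← conjTranspose_eq_transpose_of_trivial]; exact hB.isHermitian
  have hCsym : Cᵀ = C := by
    rw [← conjTranspose_eq_transpose_of_trivial]; exact hC.isHermitian
  have hM : (Hᵀ * B * H).PosSemidef := by
    have := hB.posSemidef.conjTranspose_mul_mul_same H
    rwa [conjTranspose_eq_transpose_of_trivial] at this
  -- symmetry helper for B
  have hBdot : ∀ x y : Fin m → ℝ, x ⬝ᵥ (B *ᵥ y) = y ⬝ᵥ (B *ᵥ x) := by
    intro x y
    conv_lhs => rw [← hBsym]
    rw [mulVec_transpose, dotProduct_comm, ← dotProduct_mulVec]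
  have hCdot : ∀ x y : Fin n → ℝ, x ⬝ᵥ (C *ᵥ y) = y ⬝ᵥ (C *ᵥ x) := by
    intro x y
    conv_lhs => rw [← hCsym]
    rw [mulVec_transpose, dotProduct_comm, ← dotProduct_mulVec]
  -- nonnegativity helpers
  have hCnn : ∀ x : Fin n → ℝ, 0 ≤ x ⬝ᵥ (C *ᵥ x) := by
    intro x; simpa using hC.dotProduct_mulVec_nonneg x
  have hMnn : ∀ x : Fin n → ℝ, 0 ≤ x ⬝ᵥ ((Hᵀ * B * H) *ᵥ x) := by
    intro x; simpa using hM.dotProduct_mulVec_nonneg x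
  set A : Matrix (Fin n) (Fin n) ℝ := Hᵀ * Γ⁻¹ * H * C + 1 with hAdef
  -- A is invertible
  have hAunit : IsUnit A.det := by
    by_contra h
    have hdet : A.det = 0 := by
      rcases eq_or_ne A.det 0 with h0 | h0
      · exact h0
      · exact absurd (h0.isUnit) h
    obtain ⟨x, hx0, hx⟩ := (Matrix.exists_mulVec_eq_zero_iff).mpr hdet
    have hx' : (Hᵀ * B * H) *ᵥ (C *ᵥ x) + x = 0 := by
      have : A *ᵥ x = (Hᵀ * B * H) *ᵥ (C *ᵥ x) + x := by
        rw [hAdef, add_mulVec, one_mulVec, mulVec_mulVec]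
      rw [← this, hx]
    have hdot : (C *ᵥ x) ⬝ᵥ ((Hᵀ * B * H) *ᵥ (C *ᵥ x)) + x ⬝ᵥ (C *ᵥ x) = 0 := by
      have := congrArg (fun z => (C *ᵥ x) ⬝ᵥ z) hx'
      simpa [dotProduct_add, dotProduct_comm (C *ᵥ x) x] using this
    have h1 := hMnn (C *ᵥ x)
    have h2 := hCnn x
    have hCx0 : x ⬝ᵥ (C *ᵥ x) = 0 := by linarith
    have hCx : C *ᵥ x = 0 := by
      have := (hC.dotProduct_mulVec_zero_iff x).mp (by simpa using hCx0)
      exact this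
    have : x = 0 := by
      have := hx'
      rw [hCx, mulVec_zero, zero_add] at this
      exact this
    exact hx0 this
  have hAA : A * A⁻¹ = 1 := Matrix.mul_nonsing_inv A hAunit
  have hAA' : A⁻¹ * A = 1 := Matrix.nonsing_inv_mul A hAunit
  -- equation for astar
  have hAeq : A *ᵥ astar = (Hᵀ * B) *ᵥ y' := by
    rw [hastar, mulVec_mulVec, ← Matrix.mul_assoc, hAA, Matrix.one_mul]
  have hstar : astar = (Hᵀ * B) *ᵥ (y' - H *ᵥ vstar) := by
    have h1 : (Hᵀ * B * H) *ᵥ vstar + astar = (Hᵀ * B) *ᵥ y' := by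
      have : A *ᵥ astar = (Hᵀ * B * H) *ᵥ (C *ᵥ astar) + astar := by
        rw [hAdef, add_mulVec, one_mulVec, mulVec_mulVec]
      rw [← hvstar] at this
      rw [← this, hAeq]
    have : astar = (Hᵀ * B) *ᵥ y' - (Hᵀ * B * H) *ᵥ vstar := by
      rw [← h1]; abel
    rw [this, mulVec_sub, mulVec_mulVec]
  constructor
  · intro a v' hva
    -- key identity
    have hvv : v' = C *ᵥ a := hva.symm
    set s := y' - H *ᵥ vstar with hs
    set r := v' - vstar with hr
    set d := a - astar with hd
    have hCd : C *ᵥ d = r := by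
      rw [hd, mulVec_sub, hva, ← hvstar, hr]
    have hHv' : y' - H *ᵥ v' = s - H *ᵥ r := by
      rw [hs, hr, mulVec_sub]; abel
    -- cross term
    have hcross : (H *ᵥ r) ⬝ᵥ (B *ᵥ s) = astar ⬝ᵥ r := by
      rw [dot_flip, mulVec_mulVec, ← hstar, dotProduct_comm]
    have hquad : (H *ᵥ r) ⬝ᵥ (B *ᵥ (H *ᵥ r)) = r ⬝ᵥ ((Hᵀ * B * H) *ᵥ r) := by
      rw [dot_flip, mulVec_mulVec, mulVec_mulVec]
    have hT1 : (y' - H *ᵥ v') ⬝ᵥ (B *ᵥ (y' - H *ᵥ v')) =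
        s ⬝ᵥ (B *ᵥ s) - 2 * (astar ⬝ᵥ r) + r ⬝ᵥ ((Hᵀ * B * H) *ᵥ r) := by
      rw [hHv']
      rw [sub_dotProduct, mulVec_sub, dotProduct_sub, dotProduct_sub]
      rw [hBdot s (H *ᵥ r), hcross, hquad]
      ring
    have hT2 : a ⬝ᵥ v' = astar ⬝ᵥ vstar + 2 * (astar ⬝ᵥ r) + d ⬝ᵥ (C *ᵥ d) := by
      have ha : a = astar + d := by rw [hd]; abel
      have hv : v' = vstar + r := by rw [hr]; abel
      rw [ha, hv, add_dotProduct, dotProduct_add, dotProduct_add]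
      have h1 : astar ⬝ᵥ r = astar ⬝ᵥ (C *ᵥ d) := by rw [hCd]
      have h2 : d ⬝ᵥ vstar = astar ⬝ᵥ r := by
        rw [hvstar, hCdot d astar, ← hCd]
      have h3 : d ⬝ᵥ r = d ⬝ᵥ (C *ᵥ d) := by rw [hCd]
      rw [h2, h3]
      have h4 : astar ⬝ᵥ r = astar ⬝ᵥ r := rfl
      ring
    have hkey : (1 / 2) * ((y' - H.mulVec v') ⬝ᵥ B.mulVec (y' - H.mulVec v')) +
        (1 / 2) * (a ⬝ᵥ v') =
        ((1 / 2) * ((y' - H.mulVec vstar) ⬝ᵥ B.mulVec (y' - H.mulVec vstar)) +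
        (1 / 2) * (astar ⬝ᵥ vstar)) +
        ((1 / 2) * (r ⬝ᵥ ((Hᵀ * B * H) *ᵥ r)) + (1 / 2) * (d ⬝ᵥ (C *ᵥ d))) := by
      rw [hT1, hT2, ← hs]; ring
    have hpos1 := hMnn r
    have hpos2 := hCnn d
    constructor
    · rw [hkey]; linarith
    · intro heq
      rw [hkey] at heq
      have hz : (1 / 2) * (r ⬝ᵥ ((Hᵀ * B * H) *ᵥ r)) + (1 / 2) * (d ⬝ᵥ (C *ᵥ d)) = 0 := by
        linarith
      have hdz : d ⬝ᵥ (C *ᵥ d) = 0 := by linarith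
      have hCd0 : C *ᵥ d = 0 := (hC.dotProduct_mulVec_zero_iff d).mp (by simpa using hdz)
      have : r = 0 := by rw [← hCd, hCd0]
      rw [hr] at this
      exact sub_eq_zero.mp this
  · -- second part
    have hSpd : (H * C * Hᵀ + Γ).PosDef := by
      have hpsd : (H * C * Hᵀ).PosSemidef := by
        have := hC.mul_mul_conjTranspose_same H
        rwa [conjTranspose_eq_transpose_of_trivial] at this
      exact Matrix.PosDef.posSemidef_add hpsd hΓ
    set S := H * C * Hᵀ + Γ with hSdef
    have hSunit : IsUnit S.det := hSpd.det_pos.ne'.isUnit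
    have hSS : S * S⁻¹ = 1 := Matrix.mul_nonsing_inv S hSunit
    have hΓinv : Γ⁻¹ * Γ = 1 := Matrix.nonsing_inv_mul Γ (hΓ.det_pos.ne'.isUnit)
    have h1 : Hᵀ * Γ⁻¹ * S = A * Hᵀ := by
      rw [hSdef, hAdef, Matrix.mul_add, Matrix.add_mul, Matrix.one_mul,
        Matrix.mul_assoc Hᵀ Γ⁻¹ Γ, hΓinv, Matrix.mul_one]
      simp only [Matrix.mul_assoc]
    have h2 : Hᵀ * Γ⁻¹ = A * (Hᵀ * S⁻¹) := by
      calc Hᵀ * Γ⁻¹ = Hᵀ * Γ⁻¹ * (S * S⁻¹) := by rw [hSS, Matrix.mul_one]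
        _ = (Hᵀ * Γ⁻¹ * S) * S⁻¹ := (Matrix.mul_assoc _ _ _).symm
        _ = A * Hᵀ * S⁻¹ := by rw [h1]
        _ = A * (Hᵀ * S⁻¹) := by rw [Matrix.mul_assoc]
    have h3 : A⁻¹ * (Hᵀ * Γ⁻¹) = Hᵀ * S⁻¹ := by
      rw [h2, ← Matrix.mul_assoc, hAA', Matrix.one_mul]
    rw [hvstar, hastar, hBdef, mulVec_mulVec, ← Matrix.mul_assoc, Matrix.mul_assoc C _ _, h3,
      ← Matrix.mul_assoc]
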